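/- Let X̃₁ and X̃₂ be strong fuzzy incidence graphs such that the maximum of the η-weights of pairs in X̃₁ is less than or equal to the minimum of the η-weights of pairs in X̃₂. Then the composition X̃₁[X̃₂] is a strong fuzzy incidence graph. -/

import Mathlib

open scoped BigOperators

/-- A fuzzy incidence graph on a finite vertex type `V`.  An (undirected, loopless) edge `xy`
is encoded by the symmetric membership function `rho`, and the incidence pair `(x, xy)`
is encoded by `eta x y` (so `eta x y` is the membership value of the pair consisting of the
vertex `x` and the edge joining `x` and `y`). All membership values lie in `[0,1]`,
`rho xy ≤ min (eps x) (eps y)` and `eta (x, xy) ≤ min (eps x) (rho xy)`. -/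
structure FIG (V : Type) [Fintype V] [DecidableEq V] where
  eps : V → ℝ
  rho : V → V → ℝ
  eta : V → V → ℝ
  eps_nonneg : ∀ x, 0 ≤ eps x
  eps_le_one : ∀ x, eps x ≤ 1
  rho_nonneg : ∀ x y, 0 ≤ rho x y
  rho_symm : ∀ x y, rho x y = rho y x
  rho_le : ∀ x y, rho x y ≤ min (eps x) (eps y)
  rho_irrefl : ∀ x, rho x x = 0
  eta_nonneg : ∀ x y, 0 ≤ eta x y
  eta_le : ∀ x y, eta x y ≤ min (eps x) (rho x y)

namespace FIG

variable {V V₁ V₂ : Type} [Fintype V] [DecidableEq V]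
  [Fintype V₁] [DecidableEq V₁] [Fintype V₂] [DecidableEq V₂]

/-- `(x, xy)` is a pair of the fuzzy incidence graph (i.e. belongs to the support `η*`). -/
def IsPair (G : FIG V) (x y : V) : Prop := 0 < G.eta x y

/-- the minimum of the two pair weights along one edge step of an incidence path -/
def pairMin (G : FIG V) (a b : V) : ℝ := min (G.eta a b) (G.eta b a)

/-- the minimum of the pair weights along the internal steps of a vertex list -/
def chainStrength (G : FIG V) : List V → ℝ
  | [] => 1
  | [_] => 1
  | a :: b :: l => min (G.pairMin a b) (G.chainStrength (b :: l))

/-- The set of incidence strengths of incidence paths from the vertex `x` to the edge `yz`: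
a path is recorded by its (pairwise distinct) sequence of vertices, starting at `x` and ending
at an endpoint of the edge `yz`; its strength is the minimum of the weights of its pairs
(pairs of weight `0` are not genuine pairs, but a list using them has strength `0`, so
including such lists does not alter the supremum below). -/
def pathStrengths (G : FIG V) (x y z : V) : Set ℝ :=
  {s | ∃ l : List V, l.Nodup ∧ l.head? = some x ∧
      ((l.getLast? = some y ∧ s = min (G.chainStrength l) (G.eta y z)) ∨
       (l.getLast? = some z ∧ s = min (G.chainStrength l) (G.eta z y)))}

/-- `ICONN G x y z` is the greatest incidence strength of an incidence path from the
vertex `x` to the edge `yz` (the incidence connectivity `ICONN_G (x, yz)`). -/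
noncomputable def ICONN (G : FIG V) (x y z : V) : ℝ := sSup (G.pathStrengths x y z)

/-- the fuzzy incidence graph obtained by deleting the pair `(a, ab)` -/
def deletePair (G : FIG V) (a b : V) : FIG V where
  eps := G.eps
  rho := G.rho
  eta := fun u v => if u = a ∧ v = b then 0 else G.eta u v
  eps_nonneg := G.eps_nonneg
  eps_le_one := G.eps_le_one
  rho_nonneg := G.rho_nonneg
  rho_symm := G.rho_symm
  rho_le := G.rho_le
  rho_irrefl := G.rho_irrefl
  eta_nonneg := by
    intro u v; (try dsimp only); split
    · exact le_refl 0
    · exact G.eta_nonneg u v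
  eta_le := by
    intro u v; (try dsimp only); split
    · exact le_min (G.eps_nonneg u) (G.rho_nonneg u v)
    · exact G.eta_le u v

/-- The pair `(x, xy)` is strong: its weight is at least the incidence connectivity
between `x` and the edge `xy` in the graph obtained by deleting the pair `(x, xy)`. -/
def IsStrongPair (G : FIG V) (x y : V) : Prop :=
  (G.deletePair x y).ICONN x x y ≤ G.eta x y

/-- a strong fuzzy incidence graph: every pair is strong -/
def Strong (G : FIG V) : Prop := ∀ x y, G.IsPair x y → G.IsStrongPair x y

/-- The pair `(x, xy)` is effective: `η(x, xy) = min (ε x) (ρ xy)`. -/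
def EffectivePair (G : FIG V) (x y : V) : Prop :=
  G.eta x y = min (G.eps x) (G.rho x y)

/-- a fuzzy incidence graph in which every pair is effective -/
def EffectivePairs (G : FIG V) : Prop := ∀ x y, G.IsPair x y → G.EffectivePair x y

/-- The composition `G₁[G₂]` of two fuzzy incidence graphs: `(a₁,b₁)(a₂,b₂)` is an edge
when `a₁ = a₂` and `b₁b₂ ∈ E₂`, or `a₁a₂ ∈ E₁`; a pair of the composition exists when
both corresponding pairs of the relevant factor exist. -/
noncomputable def comp (G₁ : FIG V₁) (G₂ : FIG V₂) : FIG (V₁ × V₂) where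
  eps := fun p => min (G₁.eps p.1) (G₂.eps p.2)
  rho := fun p q =>
    if p.1 = q.1 then min (G₁.eps p.1) (G₂.rho p.2 q.2)
    else if p.2 = q.2 then min (G₁.rho p.1 q.1) (G₂.eps p.2)
    else min (G₁.rho p.1 q.1) (min (G₂.eps p.2) (G₂.eps q.2))
  eta := fun p q =>
    if p.1 = q.1 then
      (if 0 < G₂.eta p.2 q.2 ∧ 0 < G₂.eta q.2 p.2 then
        min (G₁.eps p.1) (G₂.eta p.2 q.2) else 0)
    else if 0 < G₁.eta p.1 q.1 ∧ 0 < G₁.eta q.1 p.1 then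
      (if p.2 = q.2 then min (G₁.eta p.1 q.1) (G₂.eps p.2)
       else min (G₁.eta p.1 q.1) (min (G₂.eps p.2) (G₂.eps q.2)))
    else 0
  eps_nonneg := fun p => le_min (G₁.eps_nonneg p.1) (G₂.eps_nonneg p.2)
  eps_le_one := fun p => min_le_of_left_le (G₁.eps_le_one p.1)
  rho_nonneg := by
    intro p q; (try dsimp only); split
    · exact le_min (G₁.eps_nonneg _) (G₂.rho_nonneg _ _)
    · split
      · exact le_min (G₁.rho_nonneg _ _) (G₂.eps_nonneg _)
      · exact le_min (G₁.rho_nonneg _ _) (le_min (G₂.eps_nonneg _) (G₂.eps_nonneg _))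
  rho_symm := by
    intro p q; (try dsimp only)
    by_cases h1 : p.1 = q.1
    · simp [h1, G₂.rho_symm p.2 q.2]
    · by_cases h2 : p.2 = q.2
      · simp [h1, Ne.symm h1, h2, G₁.rho_symm p.1 q.1]
      · simp [h1, Ne.symm h1, h2, Ne.symm h2, G₁.rho_symm p.1 q.1, min_comm (G₂.eps p.2) (G₂.eps q.2)]
  rho_le := by
    intro p q; (try dsimp only); split
    · rename_i h1
      refine le_min (le_min (min_le_left _ _) (min_le_of_right_le ?_))
        (le_min (h1 ▸ min_le_left _ _) (min_le_of_right_le ?_))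
      · exact le_trans (G₂.rho_le p.2 q.2) (min_le_left _ _)
      · exact le_trans (G₂.rho_le p.2 q.2) (min_le_right _ _)
    · split
      · rename_i h1 h2
        refine le_min (le_min (min_le_of_left_le ?_) (min_le_right _ _))
          (le_min (min_le_of_left_le ?_) (h2 ▸ min_le_right _ _))
        · exact le_trans (G₁.rho_le p.1 q.1) (min_le_left _ _)
        · exact le_trans (G₁.rho_le p.1 q.1) (min_le_right _ _)
      · refine le_min (le_min (min_le_of_left_le ?_) (min_le_of_right_le (min_le_left _ _)))
          (le_min (min_le_of_left_le ?_) (min_le_of_right_le (min_le_right _ _)))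
        · exact le_trans (G₁.rho_le p.1 q.1) (min_le_left _ _)
        · exact le_trans (G₁.rho_le p.1 q.1) (min_le_right _ _)
  rho_irrefl := by
    intro p; (try dsimp only)
    rw [if_pos rfl, G₂.rho_irrefl]
    exact min_eq_right (G₁.eps_nonneg p.1)
  eta_nonneg := by
    intro p q; (try dsimp only); split
    · split
      · exact le_min (G₁.eps_nonneg _) (G₂.eta_nonneg _ _)
      · exact le_refl 0
    · split
      · split
        · exact le_min (G₁.eta_nonneg _ _) (G₂.eps_nonneg _)
        · exact le_min (G₁.eta_nonneg _ _) (le_min (G₂.eps_nonneg _) (G₂.eps_nonneg _))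
      · exact le_refl 0
  eta_le := by
    intro p q; (try dsimp only); split
    · split
      · refine le_min (le_min (min_le_left _ _) (min_le_of_right_le ?_))
          (le_min (min_le_left _ _) (min_le_of_right_le ?_))
        · exact le_trans (G₂.eta_le p.2 q.2) (min_le_left _ _)
        · exact le_trans (G₂.eta_le p.2 q.2) (min_le_right _ _)
      · exact le_min (le_min (G₁.eps_nonneg _) (G₂.eps_nonneg _))
          (le_min (G₁.eps_nonneg _) (G₂.rho_nonneg _ _))
    · split
      · split
        · rename_i hg h2
          refine le_min (le_min (min_le_of_left_le ?_) (min_le_right _ _))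
            (le_min (min_le_of_left_le ?_) (min_le_right _ _))
          · exact le_trans (G₁.eta_le p.1 q.1) (min_le_left _ _)
          · exact le_trans (G₁.eta_le p.1 q.1) (min_le_right _ _)
        · refine le_min (le_min (min_le_of_left_le ?_) (min_le_of_right_le (min_le_left _ _)))
            (le_min (min_le_of_left_le ?_) (min_le_right _ _))
          · exact le_trans (G₁.eta_le p.1 q.1) (min_le_left _ _)
          · exact le_trans (G₁.eta_le p.1 q.1) (min_le_right _ _)
      · split
        · exact le_min (le_min (G₁.eps_nonneg _) (G₂.eps_nonneg _))
            (le_min (G₁.rho_nonneg _ _) (G₂.eps_nonneg _))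
        · exact le_min (le_min (G₁.eps_nonneg _) (G₂.eps_nonneg _))
            (le_min (G₁.rho_nonneg _ _) (le_min (G₂.eps_nonneg _) (G₂.eps_nonneg _)))

section Helpers

variable {V : Type} [Fintype V] [DecidableEq V]

theorem infix_pair_cons_iff {α : Type*} {u v a : α} {L : List α} :
    [u, v] <:+: (a :: L) ↔ (u = a ∧ L.head? = some v) ∨ [u, v] <:+: L := by
  constructor
  · rintro ⟨s, t, h⟩
    cases s with
    | nil =>
      simp only [List.nil_append, List.cons_append] at h
      obtain ⟨rfl, rfl⟩ : u = a ∧ L = v :: t := by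
        injection h with h1 h2; exact ⟨h1, h2.symm⟩
      exact Or.inl ⟨rfl, rfl⟩
    | cons c s₀ =>
      simp only [List.cons_append] at h
      injection h with h1 h2
      exact Or.inr ⟨s₀, t, h2⟩
  · rintro (⟨rfl, hv⟩ | h)
    · cases L with
      | nil => simp at hv
      | cons b t =>
        injection hv with hv; subst hv
        exact ⟨[], t, rfl⟩
    · exact h.trans (List.suffix_cons a L).isInfix

theorem pairMin_nonneg (G : FIG V) (a b : V) : 0 ≤ G.pairMin a b :=
  le_min (G.eta_nonneg a b) (G.eta_nonneg b a)

theorem pairMin_le_one (G : FIG V) (a b : V) : G.pairMin a b ≤ 1 :=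
  le_trans (min_le_left _ _) (le_trans (G.eta_le a b)
    (le_trans (min_le_left _ _) (G.eps_le_one a)))

theorem chainStrength_nonneg (G : FIG V) : ∀ l : List V, 0 ≤ G.chainStrength l
  | [] => zero_le_one
  | [_] => zero_le_one
  | a :: b :: l => le_min (G.pairMin_nonneg a b) (G.chainStrength_nonneg (b :: l))

theorem chainStrength_le_one (G : FIG V) : ∀ l : List V, G.chainStrength l ≤ 1
  | [] => le_refl 1
  | [_] => le_refl 1
  | _ :: b :: l => le_trans (min_le_right _ _) (G.chainStrength_le_one (b :: l))

theorem chainStrength_cons_le (G : FIG V) (a : V) (l : List V) :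
    G.chainStrength (a :: l) ≤ G.chainStrength l := by
  cases l with
  | nil => exact le_refl 1
  | cons b t => exact min_le_right _ _

theorem chainStrength_suffix_le (G : FIG V) {l₁ l₂ : List V} (h : l₁ <:+ l₂) :
    G.chainStrength l₂ ≤ G.chainStrength l₁ := by
  obtain ⟨t, rfl⟩ := h
  induction t with
  | nil => exact le_refl _
  | cons a t ih => exact le_trans (G.chainStrength_cons_le a _) ih

theorem chainStrength_infix_le (G : FIG V) {u v : V} {l : List V} (h : [u, v] <:+: l) :
    G.chainStrength l ≤ G.pairMin u v := by
  obtain ⟨s, t, rfl⟩ := h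
  refine le_trans (G.chainStrength_suffix_le (l₁ := u :: v :: t) ⟨s, by simp⟩) (min_le_left _ _)

theorem chainStrength_mono {G H : FIG V} (h : ∀ x y, G.eta x y ≤ H.eta x y) :
    ∀ l : List V, G.chainStrength l ≤ H.chainStrength l
  | [] => le_refl 1
  | [_] => le_refl 1
  | a :: b :: l =>
    min_le_min (min_le_min (h a b) (h b a)) (chainStrength_mono h (b :: l))

theorem chainStrength_congr {G H : FIG V} :
    ∀ l : List V, (∀ u v, [u, v] <:+: l → G.pairMin u v = H.pairMin u v) →
      G.chainStrength l = H.chainStrength l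
  | [], _ => rfl
  | [_], _ => rfl
  | a :: b :: l, h => by
    show min _ _ = min _ _
    rw [h a b ⟨[], l, rfl⟩, chainStrength_congr (b :: l)
      (fun u v hi => h u v (hi.trans (List.suffix_cons a _).isInfix))]

theorem chainStrength_le_eta {G : FIG V} {u v : V} {l : List V} (h : [u, v] <:+: l) :
    G.chainStrength l ≤ G.eta u v :=
  le_trans (G.chainStrength_infix_le h) (min_le_left _ _)

end Helpers
section Helpers2

variable {V : Type} [Fintype V] [DecidableEq V]

theorem exists_nodup_path (G : FIG V) :
    ∀ n (l : List V), l.length ≤ n → ∃ l' : List V, l'.Nodup ∧ l'.head? = l.head? ∧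
      l'.getLast? = l.getLast? ∧ G.chainStrength l ≤ G.chainStrength l' ∧
      (∀ u v, [u, v] <:+: l' → [u, v] <:+: l) ∧ (∀ x ∈ l', x ∈ l) := by
  intro n
  induction n with
  | zero =>
    intro l hl
    rw [Nat.le_zero, List.length_eq_zero_iff] at hl
    subst hl
    exact ⟨[], List.nodup_nil, rfl, rfl, le_refl _, fun u v h => h, fun x h => h⟩
  | succ n ih =>
    intro l hl
    cases l with
    | nil => exact ⟨[], List.nodup_nil, rfl, rfl, le_refl _, fun u v h => h, fun x h => h⟩
    | cons a t =>
      by_cases ha : a ∈ t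
      · obtain ⟨B, C, rfl⟩ := List.append_of_mem ha
        have hsuff : (a :: C) <:+ (a :: (B ++ a :: C)) := ⟨a :: B, by simp⟩
        have hlen : (a :: C).length ≤ n := by
          simp only [List.length_cons, List.length_append] at hl ⊢
          omega
        obtain ⟨l', h1, h2, h3, h4, h5, h6⟩ := ih (a :: C) hlen
        refine ⟨l', h1, by simp [h2], ?_, ?_, ?_, ?_⟩
        · rw [h3]
          show _ = ((a :: B) ++ (a :: C)).getLast?
          rw [List.getLast?_append_of_ne_nil _ (by simp)]
        · exact le_trans (G.chainStrength_suffix_le hsuff) h4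
        · exact fun u v h => (h5 u v h).trans hsuff.isInfix
        · exact fun x hx => hsuff.subset (h6 x hx)
      · have hlen : t.length ≤ n := by simpa using hl
        obtain ⟨l', h1, h2, h3, h4, h5, h6⟩ := ih t hlen
        refine ⟨a :: l', ?_, rfl, ?_, ?_, ?_, ?_⟩
        · exact List.nodup_cons.mpr ⟨fun hx => ha (h6 a hx), h1⟩
        · cases t with
          | nil =>
            have : l' = [] := by
              cases l' with
              | nil => rfl
              | cons b r => simp at h2
            subst this; rfl
          | cons b r =>
            cases l' with
            | nil => simp at h2
            | cons c r' =>
              rw [List.getLast?_cons_cons, List.getLast?_cons_cons, h3]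
        · cases t with
          | nil =>
            have : l' = [] := by
              cases l' with
              | nil => rfl
              | cons b r => simp at h2
            subst this
            exact le_refl _
          | cons b r =>
            cases l' with
            | nil => simp at h2
            | cons c r' =>
              have hc : c = b := by simpa using h2
              subst hc
              exact min_le_min (le_refl _) h4
        · intro u v h
          rw [infix_pair_cons_iff] at h ⊢
          rcases h with ⟨rfl, hv⟩ | h
          · cases l' with
            | nil => simp at hv
            | cons c r' =>
              injection hv with hv; subst hv
              left
              exact ⟨rfl, h2.symm⟩
          · exact Or.inr (h5 u v h)
        · intro x hx
          rcases List.mem_cons.mp hx with rfl | hx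
          · exact List.mem_cons_self
          · exact List.mem_cons_of_mem _ (h6 x hx)

theorem bddAbove_pathStrengths (G : FIG V) (x y z : V) : BddAbove (G.pathStrengths x y z) := by
  refine ⟨1, fun s hs => ?_⟩
  obtain ⟨l, _, _, (⟨_, rfl⟩ | ⟨_, rfl⟩)⟩ := hs
  · exact le_trans (min_le_left _ _) (G.chainStrength_le_one l)
  · exact le_trans (min_le_left _ _) (G.chainStrength_le_one l)

theorem le_ICONN (G : FIG V) {x y z : V} {s : ℝ} (hs : s ∈ G.pathStrengths x y z) :
    s ≤ G.ICONN x y z :=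
  le_csSup (G.bddAbove_pathStrengths x y z) hs

end Helpers2
section Helpers3

variable {V₁ V₂ : Type} [Fintype V₁] [DecidableEq V₁] [Fintype V₂] [DecidableEq V₂]

theorem comp_eta_def (G₁ : FIG V₁) (G₂ : FIG V₂) (p q : V₁ × V₂) :
    (G₁.comp G₂).eta p q =
      if p.1 = q.1 then
        (if 0 < G₂.eta p.2 q.2 ∧ 0 < G₂.eta q.2 p.2 then
          min (G₁.eps p.1) (G₂.eta p.2 q.2) else 0)
      else if 0 < G₁.eta p.1 q.1 ∧ 0 < G₁.eta q.1 p.1 then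
        (if p.2 = q.2 then min (G₁.eta p.1 q.1) (G₂.eps p.2)
         else min (G₁.eta p.1 q.1) (min (G₂.eps p.2) (G₂.eps q.2))) else 0 := rfl

theorem comp_eta_vert_le (G₁ : FIG V₁) (G₂ : FIG V₂) {p q : V₁ × V₂} (h : p.1 = q.1) :
    (G₁.comp G₂).eta p q ≤ G₂.eta p.2 q.2 := by
  rw [comp_eta_def, if_pos h]
  split
  · exact min_le_right _ _
  · exact G₂.eta_nonneg _ _

theorem comp_eta_horiz_le (G₁ : FIG V₁) (G₂ : FIG V₂) {p q : V₁ × V₂} (h : ¬ p.1 = q.1) :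
    (G₁.comp G₂).eta p q ≤ G₁.eta p.1 q.1 := by
  rw [comp_eta_def, if_neg h]
  split
  · split
    · exact min_le_left _ _
    · exact min_le_left _ _
  · exact G₁.eta_nonneg _ _

theorem comp_pairMin_vert_le (G₁ : FIG V₁) (G₂ : FIG V₂) {p q : V₁ × V₂} (h : p.1 = q.1) :
    (G₁.comp G₂).pairMin p q ≤ G₂.pairMin p.2 q.2 :=
  min_le_min (comp_eta_vert_le G₁ G₂ h) (comp_eta_vert_le G₁ G₂ h.symm)

theorem comp_pairMin_horiz_le (G₁ : FIG V₁) (G₂ : FIG V₂) {p q : V₁ × V₂} (h : ¬ p.1 = q.1) :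
    (G₁.comp G₂).pairMin p q ≤ G₁.pairMin p.1 q.1 :=
  min_le_min (comp_eta_horiz_le G₁ G₂ h) (comp_eta_horiz_le G₁ G₂ (fun hh => h hh.symm))

theorem comp_chain_map_snd (G₁ : FIG V₁) (G₂ : FIG V₂) (a : V₁) :
    ∀ l : List (V₁ × V₂), (∀ x ∈ l, x.1 = a) →
      (G₁.comp G₂).chainStrength l ≤ G₂.chainStrength (l.map Prod.snd)
  | [], _ => le_refl _
  | [_], _ => le_refl _
  | p :: q :: l, h => by
    show min _ _ ≤ min _ _
    refine min_le_min (comp_pairMin_vert_le G₁ G₂ ?_)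
      (comp_chain_map_snd G₁ G₂ a (q :: l) (fun x hx => h x (List.mem_cons_of_mem _ hx)))
    rw [h p List.mem_cons_self, h q (List.mem_cons_of_mem _ List.mem_cons_self)]

theorem fst_eq_of_no_horiz :
    ∀ (a : V₁ × V₂) (l : List (V₁ × V₂)),
      (∀ u v : V₁ × V₂, [u, v] <:+: a :: l → u.1 = v.1) → ∀ x ∈ a :: l, x.1 = a.1
  | a, [], _, x, hx => by
    obtain rfl : x = a := by simpa using hx
    rfl
  | a, c :: l, h, x, hx => by
    rcases List.mem_cons.mp hx with rfl | hx
    · rfl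
    · have hbc : a.1 = c.1 := h a c ⟨[], l, rfl⟩
      have := fst_eq_of_no_horiz c l
        (fun u v hi => h u v (hi.trans (List.suffix_cons a _).isInfix)) x hx
      rw [this, ← hbc]

theorem infix_pair_map {α β : Type*} (f : α → β) :
    ∀ (l : List α) (u v : β), [u, v] <:+: l.map f →
      ∃ x y, [x, y] <:+: l ∧ f x = u ∧ f y = v
  | [], u, v, h => by
    obtain ⟨s, t, hs⟩ := h
    simp [List.append_eq_nil_iff] at hs
  | a :: l, u, v, h => by
    rw [List.map_cons, infix_pair_cons_iff] at h
    rcases h with ⟨rfl, hv⟩ | h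
    · cases l with
      | nil => simp at hv
      | cons b t =>
        refine ⟨a, b, ⟨[], t, rfl⟩, rfl, ?_⟩
        simpa using hv
    · obtain ⟨x, y, hi, hx, hy⟩ := infix_pair_map f l u v h
      exact ⟨x, y, hi.trans (List.suffix_cons a l).isInfix, hx, hy⟩

end Helpers3
section Helpers4

set_option linter.unusedSectionVars false

variable {V₁ V₂ : Type} [Fintype V₁] [DecidableEq V₁] [Fintype V₂] [DecidableEq V₂]

/-- project a list in `V₁ × V₂` to first coordinates, collapsing consecutive duplicates -/
def proj1 [DecidableEq V₁] : List (V₁ × V₂) → List V₁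
  | [] => []
  | [x] => [x.1]
  | x :: y :: t => if x.1 = y.1 then proj1 (y :: t) else x.1 :: proj1 (y :: t)

theorem proj1_head? : ∀ (x : V₁ × V₂) (t : List (V₁ × V₂)),
    (proj1 (x :: t)).head? = some x.1
  | x, [] => rfl
  | x, y :: t => by
    rw [proj1]
    split
    · rename_i h
      rw [proj1_head? y t, h]
    · rfl

theorem proj1_getLast? : ∀ (x : V₁ × V₂) (t : List (V₁ × V₂)),
    (proj1 (x :: t)).getLast? = ((x :: t).getLast?).map Prod.fst
  | x, [] => rfl
  | x, y :: t => by
    rw [proj1]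
    have htail : ((x :: y :: t).getLast?).map Prod.fst = ((y :: t).getLast?).map Prod.fst := by
      rw [List.getLast?_cons_cons]
    split
    · rw [proj1_getLast? y t, htail]
    · rw [htail, ← proj1_getLast? y t]
      have hne : proj1 (y :: t) ≠ [] := by
        intro hnil
        have := proj1_head? y t
        rw [hnil] at this
        simp at this
      obtain ⟨c, r, hcr⟩ : ∃ c r, proj1 (y :: t) = c :: r := by
        cases hp : proj1 (y :: t) with
        | nil => exact absurd hp hne
        | cons c r => exact ⟨c, r, rfl⟩
      rw [hcr, List.getLast?_cons_cons]

theorem proj1_chain (G₁ : FIG V₁) (G₂ : FIG V₂) :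
    ∀ l : List (V₁ × V₂), (G₁.comp G₂).chainStrength l ≤ G₁.chainStrength (proj1 l)
  | [] => le_refl _
  | [_] => le_refl _
  | x :: y :: t => by
    rw [proj1]
    have hrec := proj1_chain G₁ G₂ (y :: t)
    split
    · rename_i h
      exact le_trans (min_le_right _ _) hrec
    · rename_i h
      obtain ⟨r, hr⟩ : ∃ r, proj1 (y :: t) = y.1 :: r := by
        have hh := proj1_head? y t
        cases hp : proj1 (y :: t) with
        | nil => rw [hp] at hh; exact absurd hh (by simp)
        | cons c r =>
          rw [hp] at hh
          injection hh with hh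
          exact ⟨r, by rw [hh]⟩
      rw [hr]
      show min _ _ ≤ min _ _
      refine min_le_min (comp_pairMin_horiz_le G₁ G₂ h) ?_
      rw [← hr]
      exact hrec

theorem proj1_infix : ∀ (l : List (V₁ × V₂)) (u v : V₁), [u, v] <:+: proj1 l →
    ∃ x y : V₁ × V₂, [x, y] <:+: l ∧ x.1 = u ∧ y.1 = v ∧ x.1 ≠ y.1
  | [], u, v, h => by
    obtain ⟨s, t, hs⟩ := h
    rw [proj1] at hs
    simp [List.append_eq_nil_iff] at hs
  | [x], u, v, h => by
    obtain ⟨s, t, hs⟩ := h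
    rw [proj1] at hs
    have := congrArg List.length hs
    simp at this
    omega
  | x :: y :: t, u, v, h => by
    rw [proj1] at h
    by_cases hxy : x.1 = y.1
    · rw [if_pos hxy] at h
      obtain ⟨a, b, hi, ha, hb, hne⟩ := proj1_infix (y :: t) u v h
      exact ⟨a, b, hi.trans (List.suffix_cons x _).isInfix, ha, hb, hne⟩
    · rw [if_neg hxy, infix_pair_cons_iff] at h
      rcases h with ⟨rfl, hv⟩ | h
      · rw [proj1_head? y t] at hv
        injection hv with hv
        exact ⟨x, y, ⟨[], t, rfl⟩, rfl, hv, hxy⟩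
      · obtain ⟨a, b, hi, ha, hb, hne⟩ := proj1_infix (y :: t) u v h
        exact ⟨a, b, hi.trans (List.suffix_cons x _).isInfix, ha, hb, hne⟩

end Helpers4
section Helpers5

variable {V : Type} [Fintype V] [DecidableEq V]

theorem deletePair_eta (G : FIG V) (a b u v : V) :
    (G.deletePair a b).eta u v = if u = a ∧ v = b then 0 else G.eta u v := rfl

theorem deletePair_eta_le (G : FIG V) (a b u v : V) :
    (G.deletePair a b).eta u v ≤ G.eta u v := by
  rw [deletePair_eta]
  split
  · exact G.eta_nonneg u v
  · exact le_refl _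

theorem deletePair_pairMin_eq (G : FIG V) {a b u v : V}
    (h1 : ¬(u = a ∧ v = b)) (h2 : ¬(v = a ∧ u = b)) :
    (G.deletePair a b).pairMin u v = G.pairMin u v := by
  unfold pairMin
  rw [deletePair_eta, deletePair_eta, if_neg h1, if_neg h2]

end Helpers5
/-- **Theorem 38.** If every pair weight of the strong fuzzy incidence graph `G₁` is at
most every pair weight of the strong fuzzy incidence graph `G₂`, then the composition
`G₁[G₂]` is a strong fuzzy incidence graph. -/
theorem comp_strong_of_le (G₁ : FIG V₁) (G₂ : FIG V₂)
    (h₁ : G₁.Strong) (h₂ : G₂.Strong)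
    (hle : ∀ a b : V₁, ∀ c d : V₂,
      G₁.IsPair a b → G₂.IsPair c d → G₁.eta a b ≤ G₂.eta c d) :
    (G₁.comp G₂).Strong := by
  intro p q hpair
  have hCpos : 0 < (G₁.comp G₂).eta p q := hpair
  have hpq : p ≠ q := by
    rintro rfl
    have h2 : G₂.eta p.2 p.2 = 0 :=
      le_antisymm (le_trans (G₂.eta_le _ _)
        (by rw [G₂.rho_irrefl]; exact min_le_right _ _)) (G₂.eta_nonneg _ _)
    have : (G₁.comp G₂).eta p p = 0 := by
      rw [comp_eta_def, if_pos rfl, if_neg]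
      rintro ⟨h, -⟩
      rw [h2] at h
      exact lt_irrefl 0 h
    rw [this] at hCpos
    exact lt_irrefl 0 hCpos
  refine Real.sSup_le ?_ (le_of_lt hCpos)
  rintro s ⟨l, hnd, hhd, hdisj⟩
  have hmono : ∀ x y, ((G₁.comp G₂).deletePair p q).eta x y ≤ (G₁.comp G₂).eta x y :=
    fun x y => deletePair_eta_le _ p q x y
  rcases hdisj with ⟨hlast, rfl⟩ | ⟨hlast, rfl⟩
  · -- path ends back at p: last factor is the deleted pair, value ≤ 0
    refine le_trans (min_le_right _ _) ?_
    rw [deletePair_eta, if_pos ⟨rfl, rfl⟩]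
    exact le_of_lt hCpos
  -- path ends at q
  have hqp : ((G₁.comp G₂).deletePair p q).eta q p = (G₁.comp G₂).eta q p := by
    rw [deletePair_eta, if_neg]
    rintro ⟨rfl, -⟩
    exact hpq rfl
  have hchain : ((G₁.comp G₂).deletePair p q).chainStrength l ≤ (G₁.comp G₂).chainStrength l :=
    chainStrength_mono hmono l
  have hs_chain : min (((G₁.comp G₂).deletePair p q).chainStrength l)
      (((G₁.comp G₂).deletePair p q).eta q p) ≤ (G₁.comp G₂).chainStrength l :=
    le_trans (min_le_left _ _) hchain
  have hs_eta : min (((G₁.comp G₂).deletePair p q).chainStrength l)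
      (((G₁.comp G₂).deletePair p q).eta q p) ≤ (G₁.comp G₂).eta q p :=
    le_trans (min_le_right _ _) (le_of_eq hqp)
  set s := min (((G₁.comp G₂).deletePair p q).chainStrength l)
      (((G₁.comp G₂).deletePair p q).eta q p) with hsdef
  -- structure of the list: l = p :: w :: t₂
  obtain ⟨w, t₂, rfl⟩ : ∃ w t₂, l = p :: w :: t₂ := by
    cases l with
    | nil => simp at hhd
    | cons a t =>
      obtain rfl : a = p := by simpa using hhd
      cases t with
      | nil =>
        exfalso
        apply hpq
        simpa using hlast
      | cons w t₂ => exact ⟨w, t₂, rfl⟩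
  set l : List (V₁ × V₂) := p :: w :: t₂ with hl
  -- bounds from the first step and the final factor
  have hfirst : (G₁.comp G₂).chainStrength l ≤ min (G₁.eps p.1) (G₂.eps p.2) :=
    le_trans (chainStrength_le_eta ⟨[], t₂, rfl⟩)
      (le_trans ((G₁.comp G₂).eta_le p w) (min_le_left _ _))
  have hse1 : s ≤ G₁.eps p.1 := le_trans hs_chain (le_trans hfirst (min_le_left _ _))
  have hse2 : s ≤ G₂.eps p.2 := le_trans hs_chain (le_trans hfirst (min_le_right _ _))
  have hse2' : s ≤ G₂.eps q.2 :=
    le_trans hs_eta (le_trans ((G₁.comp G₂).eta_le q p)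
      (le_trans (min_le_left _ _) (min_le_right _ _)))
  -- the deleted pair cannot occur as a step of the path, unless s ≤ 0
  by_cases hstep : ∃ u v : V₁ × V₂, [u, v] <:+: l ∧ ((u = p ∧ v = q) ∨ (u = q ∧ v = p))
  · obtain ⟨u, v, hi, hor⟩ := hstep
    have hle0 : ((G₁.comp G₂).deletePair p q).chainStrength l ≤ 0 := by
      refine le_trans (chainStrength_infix_le _ hi) ?_
      rcases hor with ⟨rfl, rfl⟩ | ⟨rfl, rfl⟩
      · exact le_trans (min_le_left _ _) (le_of_eq (by rw [deletePair_eta, if_pos ⟨rfl, rfl⟩]))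
      · exact le_trans (min_le_right _ _) (le_of_eq (by rw [deletePair_eta, if_pos ⟨rfl, rfl⟩]))
    exact le_trans (le_trans (min_le_left _ _) hle0) (le_of_lt hCpos)
  push_neg at hstep
  by_cases hcase : p.1 = q.1
  · -- Case A: vertical pair
    have hcond : 0 < G₂.eta p.2 q.2 ∧ 0 < G₂.eta q.2 p.2 := by
      by_contra hcon
      rw [comp_eta_def, if_pos hcase, if_neg hcon] at hCpos
      exact lt_irrefl 0 hCpos
    have hb : p.2 ≠ q.2 := by
      intro hb2
      exact hpq (Prod.ext hcase hb2)
    rw [comp_eta_def, if_pos hcase, if_pos hcond]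
    refine le_min hse1 ?_
    -- need: s ≤ G₂.eta p.2 q.2
    by_cases hhoriz : ∃ u v : V₁ × V₂, [u, v] <:+: l ∧ u.1 ≠ v.1
    · obtain ⟨u, v, hi, hne⟩ := hhoriz
      have hbnd : s ≤ G₁.eta u.1 v.1 :=
        le_trans hs_chain (le_trans (chainStrength_infix_le _ hi)
          (le_trans (comp_pairMin_horiz_le G₁ G₂ hne) (min_le_left _ _)))
      rcases le_or_gt (G₁.eta u.1 v.1) 0 with hnp | hp
      · exact le_trans hbnd (le_trans hnp (le_of_lt hcond.1))
      · exact le_trans hbnd (hle u.1 v.1 p.2 q.2 hp hcond.1)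
    · push_neg at hhoriz
      have hall : ∀ x ∈ l, x.1 = p.1 := fst_eq_of_no_horiz p (w :: t₂) hhoriz
      have hnd₂ : (l.map Prod.snd).Nodup := by
        refine hnd.map_on ?_
        intro x hx y hy hxy
        exact Prod.ext (by rw [hall x hx, hall y hy]) hxy
      have hhd₂ : (l.map Prod.snd).head? = some p.2 := by
        rw [List.head?_map, hhd]; rfl
      have hlast₂ : (l.map Prod.snd).getLast? = some q.2 := by
        rw [List.getLast?_map, hlast]; rfl
      have hnostep₂ : ∀ u v : V₂, [u, v] <:+: l.map Prod.snd →
          ¬(u = p.2 ∧ v = q.2) ∧ ¬(v = p.2 ∧ u = q.2) := by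
        intro u v hi
        obtain ⟨x, y, hxy, hx, hy⟩ := infix_pair_map Prod.snd l u v hi
        constructor
        · rintro ⟨rfl, rfl⟩
          exact (hstep x y hxy).1 (Prod.ext (hall x (hxy.subset (by simp))) hx)
            (Prod.ext ((hall y (hxy.subset (by simp))).trans hcase) hy)
        · rintro ⟨rfl, rfl⟩
          exact (hstep x y hxy).2 (Prod.ext ((hall x (hxy.subset (by simp))).trans hcase) hx)
            (Prod.ext (hall y (hxy.subset (by simp))) hy)
      have hcongr : (G₂.deletePair p.2 q.2).chainStrength (l.map Prod.snd)
          = G₂.chainStrength (l.map Prod.snd) := by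
        refine chainStrength_congr _ ?_
        intro u v hi
        exact deletePair_pairMin_eq G₂ (hnostep₂ u v hi).1 (hnostep₂ u v hi).2
      have hmem : min ((G₂.deletePair p.2 q.2).chainStrength (l.map Prod.snd))
          ((G₂.deletePair p.2 q.2).eta q.2 p.2)
          ∈ (G₂.deletePair p.2 q.2).pathStrengths p.2 p.2 q.2 :=
        ⟨l.map Prod.snd, hnd₂, hhd₂, Or.inr ⟨hlast₂, rfl⟩⟩
      have hdq : (G₂.deletePair p.2 q.2).eta q.2 p.2 = G₂.eta q.2 p.2 := by
        rw [deletePair_eta, if_neg]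
        rintro ⟨h, -⟩
        exact hb h.symm
      have hsle : s ≤ min ((G₂.deletePair p.2 q.2).chainStrength (l.map Prod.snd))
          ((G₂.deletePair p.2 q.2).eta q.2 p.2) := by
        refine le_min ?_ ?_
        · rw [hcongr]
          exact le_trans hs_chain (comp_chain_map_snd G₁ G₂ p.1 l hall)
        · rw [hdq]
          exact le_trans hs_eta (comp_eta_vert_le G₁ G₂ hcase.symm)
      exact le_trans hsle (le_trans (le_ICONN _ hmem) (h₂ p.2 q.2 hcond.1))
  · -- Case B: horizontal pair
    have hcond : 0 < G₁.eta p.1 q.1 ∧ 0 < G₁.eta q.1 p.1 := by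
      by_contra hcon
      rw [comp_eta_def, if_neg hcase, if_neg hcon] at hCpos
      exact lt_irrefl 0 hCpos
    have haux : s ≤ G₁.eta p.1 q.1 := by
      by_cases hedge : ∃ u v : V₁ × V₂, [u, v] <:+: l ∧
          ((u.1 = p.1 ∧ v.1 = q.1) ∨ (u.1 = q.1 ∧ v.1 = p.1))
      · obtain ⟨u, v, hi, hor⟩ := hedge
        have hne : u.1 ≠ v.1 := by
          rcases hor with ⟨h1, h2⟩ | ⟨h1, h2⟩
          · rw [h1, h2]; exact hcase
          · rw [h1, h2]; exact fun h => hcase h.symm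
        have hbnd : s ≤ G₁.pairMin u.1 v.1 :=
          le_trans hs_chain (le_trans (chainStrength_infix_le _ hi)
            (comp_pairMin_horiz_le G₁ G₂ hne))
        rcases hor with ⟨h1, h2⟩ | ⟨h1, h2⟩
        · rw [h1, h2] at hbnd
          exact le_trans hbnd (min_le_left _ _)
        · rw [h1, h2] at hbnd
          exact le_trans hbnd (min_le_right _ _)
      · push_neg at hedge
        obtain ⟨l₁', hnd₁, hhd₁, hlast₁, hch₁, hstep₁, -⟩ :=
          exists_nodup_path G₁ (proj1 l).length (proj1 l) (le_refl _)
        have hhd₁' : l₁'.head? = some p.1 := by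
          rw [hhd₁, hl, proj1_head?]
        have hlast₁' : l₁'.getLast? = some q.1 := by
          rw [hlast₁, hl, proj1_getLast? p (w :: t₂), ← hl, hlast]
          rfl
        have hnostep₁ : ∀ u v : V₁, [u, v] <:+: l₁' →
            ¬(u = p.1 ∧ v = q.1) ∧ ¬(v = p.1 ∧ u = q.1) := by
          intro u v hi
          obtain ⟨x, y, hxy, hx, hy, -⟩ := proj1_infix l u v (hstep₁ u v hi)
          constructor
          · rintro ⟨rfl, rfl⟩
            exact (hedge x y hxy).1 hx hy
          · rintro ⟨rfl, rfl⟩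
            exact (hedge x y hxy).2 hx hy
        have hcongr : (G₁.deletePair p.1 q.1).chainStrength l₁' = G₁.chainStrength l₁' := by
          refine chainStrength_congr _ ?_
          intro u v hi
          exact deletePair_pairMin_eq G₁ (hnostep₁ u v hi).1 (hnostep₁ u v hi).2
        have hmem : min ((G₁.deletePair p.1 q.1).chainStrength l₁')
            ((G₁.deletePair p.1 q.1).eta q.1 p.1)
            ∈ (G₁.deletePair p.1 q.1).pathStrengths p.1 p.1 q.1 :=
          ⟨l₁', hnd₁, hhd₁', Or.inr ⟨hlast₁', rfl⟩⟩
        have hdq : (G₁.deletePair p.1 q.1).eta q.1 p.1 = G₁.eta q.1 p.1 := by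
          rw [deletePair_eta, if_neg]
          rintro ⟨h, -⟩
          exact hcase h.symm
        have hsle : s ≤ min ((G₁.deletePair p.1 q.1).chainStrength l₁')
            ((G₁.deletePair p.1 q.1).eta q.1 p.1) := by
          refine le_min ?_ ?_
          · rw [hcongr]
            exact le_trans hs_chain (le_trans (proj1_chain G₁ G₂ l) hch₁)
          · rw [hdq]
            exact le_trans hs_eta (comp_eta_horiz_le G₁ G₂ (fun h => hcase h.symm))
        exact le_trans hsle (le_trans (le_ICONN _ hmem) (h₁ p.1 q.1 hcond.1))
    rw [comp_eta_def, if_neg hcase, if_pos hcond]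
    split
    · exact le_min haux hse2
    · exact le_min haux (le_min hse2 hse2')

end FIG
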